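/- Let ψ_n be the submeasure on K_n = (2n)^n (functions from n to 2n) defined by ψ_n(A) = min{r : there exists b ∈ [2n]^r with A ⊆ ⋃_{i∈b} î}, where î = {f : i ∉ range f}. Then ψ_n(K_n) = n+1. -/
import Mathlib


theorem stmt8 (n : ℕ) (hn : 1 ≤ n) :
    IsLeast {r : ℕ | ∃ b : Finset (Fin (2 * n)), b.card = r ∧
      ∀ f : Fin n → Fin (2 * n), ∃ i ∈ b, ∀ j, f j ≠ i} (n + 1) := by
  constructor
  · -- membership: any set of size n+1 works
    obtain ⟨b, hb, hbcard⟩ := Finset.exists_subset_card_eq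
      (s := (Finset.univ : Finset (Fin (2 * n)))) (n := n + 1)
      (by simpa using by omega)
    refine ⟨b, hbcard, fun f => ?_⟩
    have hcard : (Finset.univ.image f).card < b.card := by
      calc (Finset.univ.image f).card ≤ (Finset.univ : Finset (Fin n)).card :=
            Finset.card_image_le
        _ = n := by simp
        _ < n + 1 := Nat.lt_succ_self n
        _ = b.card := hbcard.symm
    have : ∃ i ∈ b, i ∉ Finset.univ.image f := by
      by_contra h
      push_neg at h
      exact absurd (Finset.card_le_card h) (not_le.2 hcard)
    obtain ⟨i, hib, hini⟩ := this
    exact ⟨i, hib, fun j hj => hini (Finset.mem_image.2 ⟨j, Finset.mem_univ j, hj⟩)⟩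
  · -- lower bound
    rintro r ⟨b, rfl, hcov⟩
    by_contra hlt
    push_neg at hlt
    have hble : b.card ≤ n := by omega
    set l := b.toList with hl
    have hlen : l.length = b.card := Finset.length_toList b
    have hne : l.length ≠ 0 := by
      intro h0
      have hbe : b = ∅ := Finset.card_eq_zero.1 (hlen ▸ h0)
      obtain ⟨i, hib, _⟩ := hcov (fun _ => ⟨0, by omega⟩)
      simp [hbe] at hib
    -- define f hitting everything in b
    set f : Fin n → Fin (2 * n) := fun j => l.get ⟨j % l.length, Nat.mod_lt _ (Nat.pos_of_ne_zero hne)⟩ with hf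
    obtain ⟨i, hib, hi⟩ := hcov f
    have : i ∈ l := (Finset.mem_toList).2 hib
    obtain ⟨k, hk⟩ := List.get_of_mem this
    have hkn : (k : ℕ) < n := lt_of_lt_of_le (hlen ▸ k.isLt) hble
    have := hi ⟨k, hkn⟩
    apply this
    simp only [hf]
    have : (k : ℕ) % l.length = k := Nat.mod_eq_of_lt k.isLt
    rw [← hk]
    congr 1
    exact Fin.ext this
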